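/- Cor: Let H₀, H₁ be complex Hilbert spaces, H := H₀ ⊕ H₁, and let F ∈ B(H) have block-matrix form [[k, m], [l, w − 1]]. Suppose that m = −l*w or l = −w m*. Then there exists β ∈ ℝ such that q(F) ≤ β·Δ⊥ if and only if w is a contraction. -/

import Mathlib

set_option synthInstance.maxHeartbeats 1000000
set_option maxHeartbeats 1000000

noncomputable section

open ContinuousLinearMap
open scoped InnerProductSpace

variable {H₀ H₁ : Type*} [NormedAddCommGroup H₀] [InnerProductSpace ℂ H₀] [CompleteSpace H₀]
  [NormedAddCommGroup H₁] [InnerProductSpace ℂ H₁] [CompleteSpace H₁]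

/-- The inclusion of the first summand into the Hilbert-space direct sum `H₀ ⊕ H₁`. -/
def inlL : H₀ →L[ℂ] WithLp 2 (H₀ × H₁) :=
  ((WithLp.prodContinuousLinearEquiv 2 ℂ H₀ H₁).symm.toContinuousLinearMap).comp
    (ContinuousLinearMap.inl ℂ H₀ H₁)

/-- The inclusion of the second summand into the Hilbert-space direct sum `H₀ ⊕ H₁`. -/
def inrL : H₁ →L[ℂ] WithLp 2 (H₀ × H₁) :=
  ((WithLp.prodContinuousLinearEquiv 2 ℂ H₀ H₁).symm.toContinuousLinearMap).comp
    (ContinuousLinearMap.inr ℂ H₀ H₁)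

/-- The projection of the Hilbert-space direct sum `H₀ ⊕ H₁` onto the first summand. -/
def fstL : WithLp 2 (H₀ × H₁) →L[ℂ] H₀ :=
  (ContinuousLinearMap.fst ℂ H₀ H₁).comp
    (WithLp.prodContinuousLinearEquiv 2 ℂ H₀ H₁).toContinuousLinearMap

/-- The projection of the Hilbert-space direct sum `H₀ ⊕ H₁` onto the second summand. -/
def sndL : WithLp 2 (H₀ × H₁) →L[ℂ] H₁ :=
  (ContinuousLinearMap.snd ℂ H₀ H₁).comp
    (WithLp.prodContinuousLinearEquiv 2 ℂ H₀ H₁).toContinuousLinearMap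

/-- `Δ`: the orthogonal projection of `H₀ ⊕ H₁` onto the second summand `H₁`. -/
def Delta (H₀ H₁ : Type*) [NormedAddCommGroup H₀] [InnerProductSpace ℂ H₀] [CompleteSpace H₀]
    [NormedAddCommGroup H₁] [InnerProductSpace ℂ H₁] [CompleteSpace H₁] :
    WithLp 2 (H₀ × H₁) →L[ℂ] WithLp 2 (H₀ × H₁) :=
  inrL.comp sndL

/-- `Δ⊥ = 1 - Δ`: the orthogonal projection of `H₀ ⊕ H₁` onto the first summand `H₀`. -/
def DeltaPerp (H₀ H₁ : Type*) [NormedAddCommGroup H₀] [InnerProductSpace ℂ H₀] [CompleteSpace H₀]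
    [NormedAddCommGroup H₁] [InnerProductSpace ℂ H₁] [CompleteSpace H₁] :
    WithLp 2 (H₀ × H₁) →L[ℂ] WithLp 2 (H₀ × H₁) :=
  1 - Delta H₀ H₁

/-- `q(F) := F* + F + F* Δ F`. -/
def qOp (F : WithLp 2 (H₀ × H₁) →L[ℂ] WithLp 2 (H₀ × H₁)) :
    WithLp 2 (H₀ × H₁) →L[ℂ] WithLp 2 (H₀ × H₁) :=
  star F + F + star F * (Delta H₀ H₁ * F)

section Aux

set_option linter.unusedSectionVars false

open scoped InnerProductSpace

local notation "⟪" x ", " y "⟫" => @inner ℂ _ _ x y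

@[simp] lemma inlL_fst (x : H₀) : (inlL (H₁ := H₁) x).fst = x := rfl
@[simp] lemma inlL_snd (x : H₀) : (inlL (H₁ := H₁) x).snd = 0 := rfl
@[simp] lemma inrL_fst (y : H₁) : (inrL (H₀ := H₀) y).fst = 0 := rfl
@[simp] lemma inrL_snd (y : H₁) : (inrL (H₀ := H₀) y).snd = y := rfl

lemma wlp_ext {x y : WithLp 2 (H₀ × H₁)} (h1 : x.fst = y.fst) (h2 : x.snd = y.snd) :
    x = y := WithLp.ofLp_injective 2 (Prod.ext h1 h2)

lemma wlp_decomp (z : WithLp 2 (H₀ × H₁)) : inlL z.fst + inrL z.snd = z := by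
  apply wlp_ext <;> simp [WithLp.add_fst, WithLp.add_snd]

@[simp] lemma Delta_apply_fst (z : WithLp 2 (H₀ × H₁)) :
    (Delta H₀ H₁ z).fst = 0 := rfl

@[simp] lemma Delta_apply_snd (z : WithLp 2 (H₀ × H₁)) :
    (Delta H₀ H₁ z).snd = z.snd := rfl

/-- The quadratic form of `q(F)`. -/
lemma qOp_inner (F : WithLp 2 (H₀ × H₁) →L[ℂ] WithLp 2 (H₀ × H₁))
    (z : WithLp 2 (H₀ × H₁)) :
    ⟪qOp F z, z⟫ =
      ((2 * RCLike.re ⟪F z, z⟫ + ‖(F z).snd‖ ^ 2 : ℝ) : ℂ) := by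
  have h1 : qOp F z = adjoint F z + F z + adjoint F (Delta H₀ H₁ (F z)) := by
    simp [qOp, star_eq_adjoint, ContinuousLinearMap.add_apply, ContinuousLinearMap.mul_apply]
  rw [h1, inner_add_left, inner_add_left, adjoint_inner_left, adjoint_inner_left]
  have h2 : ⟪Delta H₀ H₁ (F z), F z⟫ = ((‖(F z).snd‖ ^ 2 : ℝ) : ℂ) := by
    rw [WithLp.prod_inner_apply]
    simp [inner_self_eq_norm_sq_to_K]
  rw [h2]
  have h3 : ⟪z, F z⟫ = (starRingEnd ℂ) ⟪F z, z⟫ := (inner_conj_symm _ _).symm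
  rw [h3]
  have h4 : (starRingEnd ℂ) ⟪F z, z⟫ + ⟪F z, z⟫ = ((2 * RCLike.re ⟪F z, z⟫ : ℝ) : ℂ) := by
    rw [add_comm, Complex.add_conj]
    norm_num [RCLike.re_to_complex]
  push_cast at h4 ⊢
  linear_combination h4

lemma F_blocks (F : WithLp 2 (H₀ × H₁) →L[ℂ] WithLp 2 (H₀ × H₁))
    (k : H₀ →L[ℂ] H₀) (l : H₀ →L[ℂ] H₁) (m : H₁ →L[ℂ] H₀) (w : H₁ →L[ℂ] H₁)
    (hk : fstL ∘L (F ∘L inlL) = k) (hl : sndL ∘L (F ∘L inlL) = l)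
    (hm : fstL ∘L (F ∘L inrL) = m) (hw : sndL ∘L (F ∘L inrL) = w - 1)
    (z : WithLp 2 (H₀ × H₁)) :
    (F z).fst = k z.fst + m z.snd ∧ (F z).snd = (l z.fst + w z.snd) - z.snd := by
  have e_k : ∀ x : H₀, (F (inlL x)).fst = k x := fun x => ContinuousLinearMap.ext_iff.mp hk x
  have e_l : ∀ x : H₀, (F (inlL x)).snd = l x := fun x => ContinuousLinearMap.ext_iff.mp hl x
  have e_m : ∀ y : H₁, (F (inrL y)).fst = m y := fun y => ContinuousLinearMap.ext_iff.mp hm y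
  have e_w : ∀ y : H₁, (F (inrL y)).snd = w y - y := by
    intro y
    have := ContinuousLinearMap.ext_iff.mp hw y
    exact (by simpa using this : sndL (F (inrL y)) = w y - y)
  constructor
  · conv_lhs => rw [← wlp_decomp z]
    rw [map_add, WithLp.add_fst, e_k, e_m]
  · conv_lhs => rw [← wlp_decomp z]
    rw [map_add, WithLp.add_snd, e_l, e_w]
    abel

lemma Q_val (F : WithLp 2 (H₀ × H₁) →L[ℂ] WithLp 2 (H₀ × H₁))
    (k : H₀ →L[ℂ] H₀) (l : H₀ →L[ℂ] H₁) (m : H₁ →L[ℂ] H₀) (w : H₁ →L[ℂ] H₁)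
    (hk : fstL ∘L (F ∘L inlL) = k) (hl : sndL ∘L (F ∘L inlL) = l)
    (hm : fstL ∘L (F ∘L inrL) = m) (hw : sndL ∘L (F ∘L inrL) = w - 1)
    (z : WithLp 2 (H₀ × H₁)) :
    2 * RCLike.re ⟪F z, z⟫ + ‖(F z).snd‖ ^ 2
      = 2 * RCLike.re ⟪k z.fst, z.fst⟫ + 2 * RCLike.re ⟪m z.snd, z.fst⟫
        + ‖l z.fst + w z.snd‖ ^ 2 - ‖z.snd‖ ^ 2 := by
  obtain ⟨h1, h2⟩ := F_blocks F k l m w hk hl hm hw z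
  rw [WithLp.prod_inner_apply, WithLp.ofLp_fst, WithLp.ofLp_fst, WithLp.ofLp_snd,
    WithLp.ofLp_snd, h1, h2, @norm_sub_sq ℂ]
  simp only [inner_add_left, inner_sub_left, map_add, map_sub, inner_self_eq_norm_sq]
  ring

lemma master (F : WithLp 2 (H₀ × H₁) →L[ℂ] WithLp 2 (H₀ × H₁)) (β : ℝ)
    (z : WithLp 2 (H₀ × H₁)) :
    ⟪(β • DeltaPerp H₀ H₁ - qOp F) z, z⟫
      = ((β * ‖z.fst‖ ^ 2 - (2 * RCLike.re ⟪F z, z⟫ + ‖(F z).snd‖ ^ 2) : ℝ) : ℂ) := by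
  rw [ContinuousLinearMap.sub_apply, inner_sub_left, qOp_inner]
  have hsm : (β • DeltaPerp H₀ H₁) z = (β : ℂ) • (DeltaPerp H₀ H₁ z) := by
    rw [ContinuousLinearMap.smul_apply]
    exact RCLike.real_smul_eq_coe_smul (K := ℂ) β _
  rw [hsm, inner_smul_left, Complex.conj_ofReal]
  have hD : ⟪DeltaPerp H₀ H₁ z, z⟫ = ((‖z.fst‖ ^ 2 : ℝ) : ℂ) := by
    have hf : (DeltaPerp H₀ H₁ z).fst = z.fst := by
      show (z - Delta H₀ H₁ z).fst = z.fst
      rw [WithLp.sub_fst, Delta_apply_fst, sub_zero]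
    have hs : (DeltaPerp H₀ H₁ z).snd = 0 := by
      show (z - Delta H₀ H₁ z).snd = 0
      rw [WithLp.sub_snd, Delta_apply_snd, sub_self]
    rw [WithLp.prod_inner_apply, WithLp.ofLp_fst, WithLp.ofLp_fst, WithLp.ofLp_snd,
      WithLp.ofLp_snd, hf, hs, inner_self_eq_norm_sq_to_K]
    simp
  rw [hD]
  push_cast
  ring

end Aux

/-- Corollary (cor CkA), part (b) -/
theorem cor_CkA_b
    (F : WithLp 2 (H₀ × H₁) →L[ℂ] WithLp 2 (H₀ × H₁))
    (k : H₀ →L[ℂ] H₀) (l : H₀ →L[ℂ] H₁) (m : H₁ →L[ℂ] H₀) (w : H₁ →L[ℂ] H₁)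
    (hk : fstL ∘L (F ∘L inlL) = k) (hl : sndL ∘L (F ∘L inlL) = l)
    (hm : fstL ∘L (F ∘L inrL) = m) (hw : sndL ∘L (F ∘L inrL) = w - 1)
    (hml : m = -(adjoint l ∘L w) ∨ l = -(w ∘L adjoint m)) :
    (∃ β : ℝ, qOp F ≤ β • DeltaPerp H₀ H₁) ↔ ‖w‖ ≤ 1 := by
  have key : ∀ z : WithLp 2 (H₀ × H₁), ∀ β : ℝ,
      ⟪(β • DeltaPerp H₀ H₁ - qOp F) z, z⟫_ℂ
        = ((β * ‖z.fst‖ ^ 2 - (2 * RCLike.re ⟪k z.fst, z.fst⟫_ℂ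
            + 2 * RCLike.re ⟪m z.snd, z.fst⟫_ℂ
            + ‖l z.fst + w z.snd‖ ^ 2 - ‖z.snd‖ ^ 2) : ℝ) : ℂ) := by
    intro z β
    rw [master F β z, Q_val F k l m w hk hl hm hw z]
  constructor
  · rintro ⟨β, hβ⟩
    have hpos : (β • DeltaPerp H₀ H₁ - qOp F).IsPositive := hβ
    refine w.opNorm_le_bound zero_le_one fun y => ?_
    have h0 := hpos.inner_nonneg_left (inrL y)
    rw [key (inrL y) β] at h0
    simp only [inrL_fst, inrL_snd, norm_zero, map_zero, inner_zero_right, map_zero,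
      zero_add, RCLike.re_to_complex, Complex.ofReal_re] at h0
    have h0' : ‖w y‖ ^ 2 ≤ ‖y‖ ^ 2 := by
      have := Complex.zero_le_real.mp h0
      nlinarith [this]
    rw [one_mul]
    nlinarith [norm_nonneg (w y), norm_nonneg y]
  · intro hw1
    have hkb : ∀ x : H₀, RCLike.re ⟪k x, x⟫_ℂ ≤ ‖k‖ * ‖x‖ ^ 2 := by
      intro x
      calc RCLike.re ⟪k x, x⟫_ℂ ≤ ‖k x‖ * ‖x‖ := re_inner_le_norm _ _
        _ ≤ (‖k‖ * ‖x‖) * ‖x‖ :=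
            mul_le_mul_of_nonneg_right (k.le_opNorm x) (norm_nonneg x)
        _ = ‖k‖ * ‖x‖ ^ 2 := by ring
    rcases hml with hcase | hcase
    · refine ⟨2 * ‖k‖ + ‖l‖ ^ 2, ?_⟩
      rw [ContinuousLinearMap.le_def, ContinuousLinearMap.isPositive_iff_complex]
      intro z
      rw [key z _]
      refine ⟨by rw [RCLike.re_to_complex, Complex.ofReal_re], ?_⟩
      simp only [RCLike.re_to_complex, Complex.ofReal_re]
      have hmz : RCLike.re ⟪m z.snd, z.fst⟫_ℂ = - RCLike.re ⟪w z.snd, l z.fst⟫_ℂ := by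
        rw [hcase]
        simp only [ContinuousLinearMap.neg_apply, ContinuousLinearMap.comp_apply,
          inner_neg_left, adjoint_inner_left, map_neg]
      have hnorm : ‖l z.fst + w z.snd‖ ^ 2
          = ‖l z.fst‖ ^ 2 + 2 * RCLike.re ⟪l z.fst, w z.snd⟫_ℂ + ‖w z.snd‖ ^ 2 :=
        norm_add_sq (𝕜 := ℂ) _ _
      have hsym : RCLike.re ⟪l z.fst, w z.snd⟫_ℂ = RCLike.re ⟪w z.snd, l z.fst⟫_ℂ :=
        inner_re_symm _ _
      have hl2 : ‖l z.fst‖ ^ 2 ≤ ‖l‖ ^ 2 * ‖z.fst‖ ^ 2 := by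
        have := l.le_opNorm z.fst
        nlinarith [norm_nonneg (l z.fst), norm_nonneg z.fst, l.opNorm_nonneg]
      have hw2 : ‖w z.snd‖ ^ 2 ≤ ‖z.snd‖ ^ 2 := by
        have h1 := w.le_opNorm z.snd
        have h2 : ‖w‖ * ‖z.snd‖ ≤ ‖z.snd‖ := by
          nlinarith [norm_nonneg z.snd]
        nlinarith [norm_nonneg (w z.snd), norm_nonneg z.snd]
      have hkb' := hkb z.fst
      simp only [RCLike.re_to_complex] at hmz hnorm hsym hkb'
      rw [hnorm, hmz, hsym]
      linarith [hkb', hl2, hw2]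
    · refine ⟨2 * ‖k‖ + ‖adjoint m‖ ^ 2, ?_⟩
      rw [ContinuousLinearMap.le_def, ContinuousLinearMap.isPositive_iff_complex]
      intro z
      rw [key z _]
      refine ⟨by rw [RCLike.re_to_complex, Complex.ofReal_re], ?_⟩
      simp only [RCLike.re_to_complex, Complex.ofReal_re]
      have hu : l z.fst + w z.snd = w (z.snd - adjoint m z.fst) := by
        rw [hcase, map_sub]
        simp only [ContinuousLinearMap.neg_apply, ContinuousLinearMap.comp_apply]
        abel
      have h1 : ‖w (z.snd - adjoint m z.fst)‖ ^ 2 ≤ ‖z.snd - adjoint m z.fst‖ ^ 2 := by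
        have ha := w.le_opNorm (z.snd - adjoint m z.fst)
        have hb : ‖w‖ * ‖z.snd - adjoint m z.fst‖ ≤ ‖z.snd - adjoint m z.fst‖ := by
          nlinarith [norm_nonneg (z.snd - adjoint m z.fst)]
        nlinarith [norm_nonneg (w (z.snd - adjoint m z.fst)),
          norm_nonneg (z.snd - adjoint m z.fst)]
      have h2 : ‖z.snd - adjoint m z.fst‖ ^ 2
          = ‖z.snd‖ ^ 2 - 2 * RCLike.re ⟪z.snd, adjoint m z.fst⟫_ℂ
            + ‖adjoint m z.fst‖ ^ 2 := norm_sub_sq (𝕜 := ℂ) _ _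
      have h3 : RCLike.re ⟪z.snd, adjoint m z.fst⟫_ℂ = RCLike.re ⟪m z.snd, z.fst⟫_ℂ := by
        rw [adjoint_inner_right]
      have hm2 : ‖adjoint m z.fst‖ ^ 2 ≤ ‖adjoint m‖ ^ 2 * ‖z.fst‖ ^ 2 := by
        have := (adjoint m).le_opNorm z.fst
        nlinarith [norm_nonneg (adjoint m z.fst), norm_nonneg z.fst,
          (adjoint m).opNorm_nonneg]
      have hkb' := hkb z.fst
      simp only [RCLike.re_to_complex] at h2 h3 hkb'
      rw [hu]
      linarith [hkb', h1, h2, h3, hm2]
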